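/- Let p be a prime, let G be the direct sum of d copies of the Prüfer quasicyclic group ℤ(p^∞), and let H be a subgroup of G. Then either H is finite, or the quotient G/H is isomorphic to the direct sum of d' copies of ℤ(p^∞) for some d' < d. -/

import Mathlib

/-- The group `ℚ/ℤ`. -/
abbrev QModZ : Type := ℚ ⧸ AddSubgroup.zmultiples (1 : ℚ)

/-- The Prüfer quasicyclic `p`-group `ℤ(p^∞)`, realized as the `p`-primary component
of `ℚ/ℤ` (the subgroup of elements of `p`-power order). -/
abbrev ZpInfty (p : ℕ) [Fact p.Prime] : AddSubgroup QModZ :=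
  AddCommGroup.primaryComponent QModZ p

set_option linter.unusedSectionVars false

namespace PruferAux

variable {p : ℕ} [Fact p.Prime]

/-- `A` is a `p`-primary group. -/
def Prim (p : ℕ) (A : Type*) [AddCommGroup A] : Prop := ∀ x : A, ∃ n : ℕ, p ^ n • x = 0

/-- `A` is `p`-divisible. -/
def PDiv (p : ℕ) (A : Type*) [AddCommGroup A] : Prop := ∀ x : A, ∃ y : A, p • y = x

/-- the `p`-socle. -/
def socle (p : ℕ) (A : Type*) [AddCommGroup A] : AddSubgroup A where
  carrier := {x | p • x = 0}
  zero_mem' := smul_zero _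
  add_mem' := by
    intro a b ha hb
    simp only [Set.mem_setOf_eq, smul_add] at *
    rw [ha, hb, add_zero]
  neg_mem' := by
    intro a ha
    simp only [Set.mem_setOf_eq, smul_neg] at *
    rw [ha, neg_zero]

lemma mem_socle {A : Type*} [AddCommGroup A] {x : A} : x ∈ socle p A ↔ p • x = 0 := Iff.rfl

section basic

variable {A : Type*} [AddCommGroup A]

lemma Prim.addSubgroup (h : Prim p A) (B : AddSubgroup A) : Prim p B := by
  intro x
  obtain ⟨n, hn⟩ := h (x : A)
  exact ⟨n, Subtype.ext (by simpa using hn)⟩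

lemma Prim.of_surjective {B : Type*} [AddCommGroup B] (h : Prim p A) (f : A →+ B)
    (hf : Function.Surjective f) : Prim p B := by
  intro x
  obtain ⟨a, rfl⟩ := hf x
  obtain ⟨n, hn⟩ := h a
  exact ⟨n, by rw [← map_nsmul, hn, map_zero]⟩

lemma PDiv.of_surjective {B : Type*} [AddCommGroup B] (h : PDiv p A) (f : A →+ B)
    (hf : Function.Surjective f) : PDiv p B := by
  intro x
  obtain ⟨a, rfl⟩ := hf x
  obtain ⟨y, hy⟩ := h a
  exact ⟨f y, by rw [← map_nsmul, hy]⟩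

lemma Prim.of_equiv {B : Type*} [AddCommGroup B] (h : Prim p A) (f : A ≃+ B) : Prim p B :=
  h.of_surjective f.toAddMonoidHom f.surjective

lemma PDiv.of_equiv {B : Type*} [AddCommGroup B] (h : PDiv p A) (f : A ≃+ B) : PDiv p B :=
  h.of_surjective f.toAddMonoidHom f.surjective

lemma PDiv.pow (h : PDiv p A) (k : ℕ) (a : A) : ∃ b, p ^ k • b = a := by
  induction k generalizing a with
  | zero => exact ⟨a, by simp⟩
  | succ n ih =>
      obtain ⟨y, hy⟩ := ih a
      obtain ⟨b, hb⟩ := h y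
      exact ⟨b, by rw [pow_succ, mul_smul, hb, hy]⟩

/-- A nonzero element of a `p`-primary group yields a nonzero socle element. -/
lemma Prim.exists_socle (h : Prim p A) {x : A} (hx : x ≠ 0) :
    ∃ y : A, y ≠ 0 ∧ p • y = 0 ∧ ∃ m : ℕ, y = p ^ m • x := by
  classical
  have hex : ∃ n, p ^ n • x = 0 := h x
  have hN : p ^ Nat.find hex • x = 0 := Nat.find_spec hex
  rcases Nat.eq_zero_or_pos (Nat.find hex) with h0 | hpos
  · exact absurd (by simpa [h0] using hN) hx
  obtain ⟨M, hM⟩ : ∃ M, Nat.find hex = M + 1 :=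
    ⟨Nat.find hex - 1, (Nat.succ_pred_eq_of_pos hpos).symm⟩
  refine ⟨p ^ M • x, ?_, ?_, M, rfl⟩
  · exact Nat.find_min hex (by omega)
  · rw [smul_smul, ← pow_succ', ← hM]; exact hN

/-- A nontrivial `p`-primary group has a nontrivial socle. -/
lemma Prim.socle_ne_bot (h : Prim p A) (hA : ∃ x : A, x ≠ 0) :
    ∃ y ∈ socle p A, y ≠ 0 := by
  obtain ⟨x, hx⟩ := hA
  obtain ⟨y, hy0, hyp, -⟩ := h.exists_socle hx
  exact ⟨y, hyp, hy0⟩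

/-- a `p`-primary `p`-divisible group is divisible. -/
noncomputable def divisibleOfPrimPDiv (hprim : Prim p A) (hdiv : PDiv p A) : DivisibleBy A ℤ := by
  have hp : p.Prime := Fact.out
  apply AddCommGroup.divisibleByIntOfSMulTopEqTop
  intro n hn
  apply AddSubgroup.map_top_of_surjective
  suffices hs : ∀ m : ℕ, m ≠ 0 → Function.Surjective (fun a : A => (m : ℤ) • a) by
    intro a
    rcases n.natAbs_eq with h | h
    · obtain ⟨y, hy⟩ := hs n.natAbs (by simpa using hn) a
      exact ⟨y, by rw [h]; exact hy⟩
    · obtain ⟨y, hy⟩ := hs n.natAbs (by simpa using hn) a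
      refine ⟨-y, ?_⟩
      show n • (-y) = a
      rw [h, neg_smul, smul_neg, neg_neg]
      exact hy
  intro m hm a
  -- write m = p ^ k * r with ¬ p ∣ r
  obtain ⟨b, hb⟩ := hdiv.pow (m.factorization p) a
  set r : ℕ := m / p ^ m.factorization p with hr
  have hmr : p ^ m.factorization p * r = m := Nat.ordProj_mul_ordCompl_eq_self m p
  have hrd : ¬ p ∣ r := Nat.not_dvd_ordCompl hp hm
  -- r is invertible on b
  obtain ⟨nb, hnb⟩ := hprim b
  have hcop : IsCoprime (r : ℤ) ((p ^ nb : ℕ) : ℤ) := by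
    rw [Nat.isCoprime_iff_coprime]
    exact Nat.Coprime.pow_right _ ((Nat.Prime.coprime_iff_not_dvd hp).mpr hrd).symm
  obtain ⟨u, v, huv⟩ := hcop
  refine ⟨u • b, ?_⟩
  show (m : ℤ) • (u • b) = a
  have h1 : (r : ℤ) • (u • b) = b := by
    have h2 : ((p ^ nb : ℕ) : ℤ) • b = 0 := by rw [natCast_zsmul, hnb]
    have h3 : ((u * r + v * (p ^ nb : ℕ)) : ℤ) • b = b := by rw [huv, one_smul]
    rw [add_smul, mul_smul, mul_smul, h2, smul_zero, add_zero] at h3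
    rw [smul_comm]; exact h3
  calc (m : ℤ) • (u • b) = ((p ^ m.factorization p * r : ℕ) : ℤ) • (u • b) := by rw [hmr]
    _ = ((p ^ m.factorization p : ℕ) : ℤ) • ((r : ℤ) • (u • b)) := by
        push_cast
        rw [mul_smul]
    _ = a := by rw [h1, natCast_zsmul, hb]

end basic
-- ### part 2
section qmodz

lemma mem_zpinfty {x : QModZ} : x ∈ ZpInfty p ↔ ∃ n : ℕ, addOrderOf x = p ^ n :=
  AddCommGroup.mem_primaryComponent_iff_addOrderOf

lemma mk_eq_zero_iff {q : ℚ} :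
    (QuotientAddGroup.mk q : QModZ) = 0 ↔ ∃ k : ℤ, (k : ℚ) = q := by
  rw [QuotientAddGroup.eq_zero_iff, AddSubgroup.mem_zmultiples_iff]
  simp [zsmul_eq_mul]

lemma zpinfty_prim : Prim p (ZpInfty p) := by
  intro x
  obtain ⟨n, hn⟩ := x.2
  refine ⟨n, Subtype.ext ?_⟩
  push_cast
  rw [← hn]

lemma mem_zpinfty_of_nsmul {x : QModZ} {n : ℕ} (h : p ^ n • x = 0) : x ∈ ZpInfty p := by
  have hp : p.Prime := Fact.out
  have := addOrderOf_dvd_of_nsmul_eq_zero h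
  obtain ⟨m, -, hm⟩ := (Nat.dvd_prime_pow hp).mp this
  exact ⟨m, by rw [← hm]; exact addOrderOf_nsmul_eq_zero x⟩

lemma zpinfty_pdiv : PDiv p (ZpInfty p) := by
  have hp : p.Prime := Fact.out
  intro x
  obtain ⟨q, hq⟩ := QuotientAddGroup.mk_surjective (x : QModZ)
  have hy : p • (QuotientAddGroup.mk (q / p) : QModZ) = (x : QModZ) := by
    rw [← QuotientAddGroup.mk_nsmul, ← hq]
    congr 1
    rw [nsmul_eq_mul]
    push_cast
    rw [← mul_div_assoc]
    exact mul_div_cancel_left₀ q (Nat.cast_ne_zero.mpr hp.ne_zero)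
  obtain ⟨n, hn⟩ := x.2
  have hmem : (QuotientAddGroup.mk (q / p) : QModZ) ∈ ZpInfty p := by
    apply mem_zpinfty_of_nsmul (n := n + 1)
    rw [pow_succ, mul_smul, hy, ← hn]
  exact ⟨⟨_, hmem⟩, Subtype.ext hy⟩

/-- the socle of `ℚ/ℤ` at `p` has cardinality `p`. -/
lemma card_socle_qmodz : Nat.card (socle p QModZ) = p := by
  have hp : p.Prime := Fact.out
  have hp0 : (p : ℚ) ≠ 0 := by exact_mod_cast hp.ne_zero
  set x₀ : QModZ := QuotientAddGroup.mk ((p : ℚ)⁻¹) with hx₀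
  set φ : ℤ →+ QModZ := zmultiplesHom QModZ x₀ with hφ
  have hφ_apply : ∀ n : ℤ, φ n = QuotientAddGroup.mk (n * (p : ℚ)⁻¹) := by
    intro n
    show n • x₀ = _
    rw [hx₀, ← QuotientAddGroup.mk_zsmul]
    congr 1
  have hrange : φ.range = socle p QModZ := by
    ext x
    constructor
    · rintro ⟨n, rfl⟩
      rw [mem_socle, hφ_apply, ← QuotientAddGroup.mk_nsmul]
      rw [show (p : ℕ) • ((n : ℚ) * (p:ℚ)⁻¹) = (n : ℚ) by rw [nsmul_eq_mul]; field_simp]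
      rw [QuotientAddGroup.eq_zero_iff, AddSubgroup.mem_zmultiples_iff]
      exact ⟨n, by simp [zsmul_eq_mul]⟩
    · intro hx
      obtain ⟨q, rfl⟩ := QuotientAddGroup.mk_surjective x
      rw [mem_socle, ← QuotientAddGroup.mk_nsmul] at hx
      obtain ⟨k, hk⟩ := mk_eq_zero_iff.mp hx
      refine ⟨k, ?_⟩
      rw [hφ_apply]
      congr 1
      rw [nsmul_eq_mul] at hk
      field_simp at hk ⊢
      linarith [hk]
  have hker : φ.ker = AddSubgroup.zmultiples (p : ℤ) := by
    ext n
    rw [AddMonoidHom.mem_ker, hφ_apply, mk_eq_zero_iff, AddSubgroup.mem_zmultiples_iff]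
    constructor
    · rintro ⟨k, hk⟩
      refine ⟨k, ?_⟩
      rw [zsmul_eq_mul]
      have h2 : ((k * p : ℤ) : ℚ) = (n : ℚ) := by
        field_simp at hk
        push_cast
        linarith [hk]
      exact_mod_cast h2
    · rintro ⟨k, hk⟩
      rw [zsmul_eq_mul] at hk
      exact ⟨k, by rw [← hk]; push_cast; field_simp⟩
  calc Nat.card (socle p QModZ) = Nat.card φ.range := by rw [hrange]
    _ = Nat.card (ℤ ⧸ φ.ker) := (Nat.card_congr (QuotientAddGroup.quotientKerEquivRange φ).toEquiv).symm
    _ = Nat.card (ZMod p) := by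
        rw [hker]
        exact Nat.card_congr (Int.quotientZMultiplesNatEquivZMod p).toEquiv
    _ = p := by simp [Nat.card_eq_fintype_card, ZMod.card]

lemma card_socle_zpinfty : Nat.card (socle p (ZpInfty p)) = p := by
  refine Eq.trans ?_ (card_socle_qmodz (p := p))
  apply Nat.card_congr
  exact
    { toFun := fun x => ⟨x.1.1, by
        have hx := x.2
        rw [mem_socle] at hx ⊢
        exact_mod_cast congrArg Subtype.val hx⟩
      invFun := fun y => ⟨⟨y.1, mem_zpinfty_of_nsmul (n := 1) (by rw [pow_one]; exact y.2)⟩, by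
        rw [mem_socle]
        apply Subtype.ext
        push_cast
        exact y.2⟩
      left_inv := fun x => by ext; rfl
      right_inv := fun y => by ext; rfl }

end qmodz

-- ### part 3 : pi groups
section pi

variable {B : Type*} [AddCommGroup B] {k : ℕ}

lemma Prim.pi (h : Prim p B) : Prim p (Fin k → B) := by
  intro x
  choose N hN using fun i => h (x i)
  refine ⟨Finset.univ.sup N, funext fun i => ?_⟩
  have hle : N i ≤ Finset.univ.sup N := Finset.le_sup (Finset.mem_univ i)
  show p ^ Finset.univ.sup N • x i = (0 : B)
  rw [show Finset.univ.sup N = (Finset.univ.sup N - N i) + N i by omega, pow_add, mul_smul,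
    hN i, smul_zero]

lemma PDiv.pi (h : PDiv p B) : PDiv p (Fin k → B) := by
  intro x
  choose y hy using fun i => h (x i)
  exact ⟨y, funext fun i => hy i⟩

/-- The socle of a finite product. -/
def soclePiEquiv : socle p (Fin k → B) ≃ (Fin k → socle p B) where
  toFun x := fun i => ⟨x.1 i, by
    have hx := x.2
    rw [mem_socle] at hx ⊢
    exact congrFun hx i⟩
  invFun y := ⟨fun i => (y i).1, by
    rw [mem_socle]
    funext i
    exact (y i).2⟩
  left_inv x := by ext; rfl
  right_inv y := by ext; rfl

lemma card_socle_pi : Nat.card (socle p (Fin k → B)) = Nat.card (socle p B) ^ k := by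
  rw [Nat.card_congr (soclePiEquiv (p := p)), Nat.card_pi]
  simp

lemma card_socle_pi_zpinfty (k : ℕ) :
    Nat.card (socle p (Fin k → ZpInfty p)) = p ^ k := by
  rw [card_socle_pi, card_socle_zpinfty]

end pi

-- ### part 4 : elementary abelian groups of equal cardinality are isomorphic
lemma nonempty_addEquiv_of_card_eq {S T : Type*} [AddCommGroup S] [AddCommGroup T]
    (hS : ∀ x : S, p • x = 0) (hT : ∀ x : T, p • x = 0) [Finite S] [Finite T]
    (h : Nat.card S = Nat.card T) : Nonempty (S ≃+ T) := by
  have hp : p.Prime := Fact.out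
  haveI : NeZero p := ⟨hp.ne_zero⟩
  letI := AddCommGroup.zmodModule (n := p) hS
  letI := AddCommGroup.zmodModule (n := p) hT
  haveI : Module.Finite (ZMod p) S := Module.Finite.of_finite
  haveI : Module.Finite (ZMod p) T := Module.Finite.of_finite
  have hrank : Module.finrank (ZMod p) S = Module.finrank (ZMod p) T := by
    haveI : Fintype S := Fintype.ofFinite S
    haveI : Fintype T := Fintype.ofFinite T
    have hcS : Fintype.card S = p ^ Module.finrank (ZMod p) S := by
      have := Module.card_eq_pow_finrank (K := ZMod p) (V := S)
      rwa [ZMod.card] at this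
    have hcT : Fintype.card T = p ^ Module.finrank (ZMod p) T := by
      have := Module.card_eq_pow_finrank (K := ZMod p) (V := T)
      rwa [ZMod.card] at this
    rw [Nat.card_eq_fintype_card, Nat.card_eq_fintype_card, hcS, hcT] at h
    exact Nat.pow_right_injective hp.two_le h
  obtain ⟨e⟩ := FiniteDimensional.nonempty_linearEquiv_of_finrank_eq hrank
  exact ⟨e.toAddEquiv⟩

-- ### part 5 : classification of p-primary p-divisible groups with finite socle
theorem nonempty_addEquiv_pow_of_prim_pdiv {A : Type} [AddCommGroup A]
    (hprim : Prim p A) (hdiv : PDiv p A) (k : ℕ)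
    (hcard : Nat.card (socle p A) = p ^ k) :
    Nonempty (A ≃+ (Fin k → ZpInfty p)) := by
  have hp : p.Prime := Fact.out
  have hWprim : Prim p (Fin k → ZpInfty p) := Prim.pi zpinfty_prim
  have hWdiv : PDiv p (Fin k → ZpInfty p) := PDiv.pi zpinfty_pdiv
  have hsoc : ∀ x : socle p (Fin k → ZpInfty p), p • x = 0 := fun x => Subtype.ext x.2
  have hsocA : ∀ x : socle p A, p • x = 0 := fun x => Subtype.ext x.2
  haveI : Finite (socle p A) := by
    apply Nat.finite_of_card_ne_zero
    rw [hcard]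
    exact (pow_pos hp.pos k).ne'
  haveI : Finite (socle p (Fin k → ZpInfty p)) := by
    apply Nat.finite_of_card_ne_zero
    rw [card_socle_pi_zpinfty]
    exact (pow_pos hp.pos k).ne'
  obtain ⟨s⟩ : Nonempty (socle p (Fin k → ZpInfty p) ≃+ socle p A) :=
    nonempty_addEquiv_of_card_eq hsoc hsocA (by rw [card_socle_pi_zpinfty, hcard])
  letI : DivisibleBy A ℤ := divisibleOfPrimPDiv hprim hdiv
  have baer := Module.Baer.of_divisible A
  obtain ⟨φ, hφ⟩ := baer.extension_property_addMonoidHom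
    (socle p (Fin k → ZpInfty p)).subtype Subtype.val_injective
    ((socle p A).subtype.comp s.toAddMonoidHom)
  have hφs : ∀ y : socle p (Fin k → ZpInfty p), φ (y : Fin k → ZpInfty p) = (s y : A) :=
    fun y => DFunLike.congr_fun hφ y
  have hinj : Function.Injective φ := by
    rw [injective_iff_map_eq_zero]
    intro a ha
    by_contra h0
    obtain ⟨y, hy0, hyp, m, hym⟩ := hWprim.exists_socle h0
    have h1 : φ y = 0 := by rw [hym, map_nsmul, ha, smul_zero]
    have h2 : (s ⟨y, hyp⟩ : A) = 0 := by rw [← hφs ⟨y, hyp⟩]; exact h1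
    have h3 : s ⟨y, hyp⟩ = 0 := Subtype.ext h2
    have h4 : (⟨y, hyp⟩ : socle p (Fin k → ZpInfty p)) = 0 :=
      s.injective (h3.trans s.map_zero.symm)
    exact hy0 (congrArg Subtype.val h4)
  have hsur : Function.Surjective φ := by
    have key : ∀ n : ℕ, ∀ a : A, p ^ n • a = 0 → a ∈ Set.range φ := by
      intro n
      induction n with
      | zero =>
          intro a ha
          rw [pow_zero, one_smul] at ha
          exact ⟨0, by rw [map_zero, ha]⟩
      | succ n ih =>
          intro a ha
          have hpa : p ^ n • (p • a) = 0 := by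
            rw [smul_smul, ← pow_succ]
            exact ha
          obtain ⟨w, hw⟩ := ih (p • a) hpa
          obtain ⟨w', hw'⟩ := hWdiv w
          have hsA : p • (a - φ w') = 0 := by
            rw [smul_sub, ← map_nsmul, hw', hw, sub_self]
          obtain ⟨u, hu⟩ := s.surjective ⟨a - φ w', hsA⟩
          refine ⟨w' + (u : Fin k → ZpInfty p), ?_⟩
          rw [map_add, hφs u, hu]
          simp
    intro a
    obtain ⟨n, hn⟩ := hprim a
    exact key n a hn
  exact ⟨(AddEquiv.ofBijective φ ⟨hinj, hsur⟩).symm⟩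

-- ### part 6 : Koenig-style extraction of a p-divisible subgroup
section koenig

variable {A : Type} [AddCommGroup A]

/-- multiplication by `p ^ n` as a hom. -/
def mulPow (p n : ℕ) (A : Type) [AddCommGroup A] : A →+ A :=
  AddMonoidHom.mk' (fun x => p ^ n • x) (fun a b => smul_add _ a b)

lemma mulPow_apply {n : ℕ} (x : A) : mulPow p n A x = p ^ n • x := rfl

lemma finite_of_hom {G B : Type*} [AddCommGroup G] [AddCommGroup B] (f : G →+ B)
    (h1 : Finite f.ker) (h2 : Finite f.range) : Finite G := by
  haveI := h1; haveI := h2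
  haveI : Finite (G ⧸ f.ker) :=
    Finite.of_equiv _ (QuotientAddGroup.quotientKerEquivRange f).symm.toEquiv
  exact Finite.of_addSubgroup_quotient f.ker

lemma finite_tor [Finite (socle p A)] (n : ℕ) : Finite ((mulPow p n A).ker) := by
  induction n with
  | zero =>
      haveI : Subsingleton ((mulPow p 0 A).ker) := by
        constructor
        intro a b
        apply Subtype.ext
        have ha := a.2
        have hb := b.2
        rw [AddMonoidHom.mem_ker, mulPow_apply, pow_zero, one_smul] at ha hb
        rw [ha, hb]
      infer_instance
  | succ n ih =>
      set K := (mulPow p (n + 1) A).ker with hK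
      set g : K →+ A := (mulPow p n A).comp K.subtype with hg
      apply finite_of_hom g
      · haveI := ih
        apply Finite.of_injective
          (fun x : g.ker => (⟨x.1.1, x.2⟩ : (mulPow p n A).ker))
        intro a b h
        apply Subtype.ext; apply Subtype.ext
        simpa using congrArg Subtype.val h
      · apply Finite.of_injective (fun y : g.range => (⟨y.1, by
          obtain ⟨x, hx⟩ := y.2
          rw [mem_socle, ← hx]
          show p • (p ^ n • (x.1 : A)) = 0
          rw [smul_smul, ← pow_succ']
          exact AddMonoidHom.mem_ker.mp x.2⟩ : socle p A))
        intro a b h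
        apply Subtype.ext
        simpa using congrArg Subtype.val h

theorem exists_pdiv_subgroup (hprim : Prim p A) [Finite (socle p A)]
    (H : AddSubgroup A) (hH : ¬ Finite H) :
    ∃ D : AddSubgroup A, D ≤ H ∧ (∃ x ∈ D, x ≠ 0) ∧ ∀ x ∈ D, ∃ y ∈ D, p • y = x := by
  classical
  set K : ℕ → AddSubgroup A := fun n => AddSubgroup.map (mulPow p n A) H with hKdef
  have hKmem : ∀ {n x}, x ∈ K n ↔ ∃ h ∈ H, p ^ n • h = x := by
    intro n x
    simp [hKdef, AddSubgroup.mem_map, mulPow_apply]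
  have hKmono : ∀ {m n : ℕ}, m ≤ n → K n ≤ K m := by
    intro m n hmn x hx
    obtain ⟨h, hh, rfl⟩ := hKmem.mp hx
    refine hKmem.mpr ⟨p ^ (n - m) • h, H.nsmul_mem hh _, ?_⟩
    rw [smul_smul, ← pow_add]
    congr 2
    omega
  have hK0 : K 0 = H := by
    ext x
    rw [hKmem]
    constructor
    · rintro ⟨h, hh, rfl⟩; rwa [pow_zero, one_smul]
    · intro hx; exact ⟨x, hx, by rw [pow_zero, one_smul]⟩
  have hKinf : ∀ n, ¬ Finite (K n) := by
    intro n hfin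
    apply hH
    set f : H →+ A := (mulPow p n A).comp H.subtype with hf
    apply finite_of_hom f
    · haveI := finite_tor (p := p) (A := A) n
      apply Finite.of_injective (fun x : f.ker => (⟨x.1.1, x.2⟩ : (mulPow p n A).ker))
      intro a b h
      apply Subtype.ext; apply Subtype.ext
      simpa using congrArg Subtype.val h
    · apply Finite.of_injective (fun y : f.range => (⟨y.1, by
        obtain ⟨x, hx⟩ := y.2
        exact hKmem.mpr ⟨x.1, x.2, hx⟩⟩ : K n))
      intro a b h
      apply Subtype.ext
      simpa using congrArg Subtype.val h
  have hKsoc : ∀ n, ∃ x, x ∈ K n ∧ x ≠ 0 ∧ p • x = 0 := by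
    intro n
    have hne : ∃ x ∈ K n, x ≠ (0 : A) := by
      by_contra hcon
      push_neg at hcon
      apply hKinf n
      haveI : Subsingleton (K n) := by
        constructor
        intro a b
        apply Subtype.ext
        rw [hcon a.1 a.2, hcon b.1 b.2]
      infer_instance
    obtain ⟨x, hx, hx0⟩ := hne
    obtain ⟨y, hy0, hyp, m, rfl⟩ := hprim.exists_socle hx0
    exact ⟨p ^ m • x, (K n).nsmul_mem hx _, hy0, hyp⟩
  set S : ℕ → AddSubgroup A := fun n => K n ⊓ socle p A with hSdef
  haveI hSfin : ∀ n, Finite (S n) := by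
    intro n
    apply Finite.of_injective (AddSubgroup.inclusion (inf_le_right : S n ≤ socle p A))
    exact AddSubgroup.inclusion_injective _
  set c : ℕ → ℕ := fun n => Nat.card (S n) with hcdef
  have hne : (Set.range c).Nonempty := ⟨c 0, 0, rfl⟩
  obtain ⟨N, hN⟩ := Nat.sInf_mem hne
  have hmin : ∀ n, c N ≤ c n := by
    intro n
    rw [hN]
    exact Nat.sInf_le ⟨n, rfl⟩
  have hSstab : ∀ n, N ≤ n → S n = S N := by
    intro n hn
    haveI := hSfin N
    exact AddSubgroup.eq_of_le_of_card_ge (inf_le_inf_right _ (hKmono hn)) (hmin n)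
  obtain ⟨x₀, hx₀K, hx₀0, hx₀p⟩ := hKsoc N
  have hx₀S : x₀ ∈ S N := ⟨hx₀K, hx₀p⟩
  have hmemK : ∀ {x : A}, x ∈ S N → ∀ n, x ∈ K n := by
    intro x hx n
    rcases le_total n N with h | h
    · exact hKmono h hx.1
    · rw [← hSstab n h] at hx
      exact hx.1
  refine ⟨⨅ n, K n, ?_, ⟨x₀, ?_, hx₀0⟩, ?_⟩
  · exact le_trans (iInf_le K 0) (le_of_eq hK0)
  · exact AddSubgroup.mem_iInf.mpr (hmemK hx₀S)
  · intro x hx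
    have hxn := AddSubgroup.mem_iInf.mp hx
    have hstep : ∀ n : ℕ, ∃ h ∈ H, p ^ (n + 1) • h = x := fun n => hKmem.mp (hxn (n + 1))
    choose h hh hsm using hstep
    set y : ℕ → A := fun n => p ^ n • h n with hydef
    have hy1 : ∀ n, y n ∈ K n := fun n => hKmem.mpr ⟨h n, hh n, rfl⟩
    have hy2 : ∀ n, p • y n = x := by
      intro n
      rw [hydef]
      show p • p ^ n • h n = x
      rw [smul_smul, ← pow_succ']
      exact hsm n
    haveI : Finite {z : A // p • z = x} := by
      apply Finite.of_injective (fun z : {z : A // p • z = x} => (⟨z.1 - y 0, by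
        rw [mem_socle, smul_sub, z.2, hy2 0, sub_self]⟩ : socle p A))
      intro a b hab
      have := congrArg Subtype.val hab
      simp only [sub_left_inj] at this
      exact Subtype.ext this
    obtain ⟨z, hz⟩ := Finite.exists_infinite_fiber (fun n => (⟨y n, hy2 n⟩ : {z : A // p • z = x}))
    have hzinf : (Set.preimage (fun n => (⟨y n, hy2 n⟩ : {z : A // p • z = x})) {z}).Infinite :=
      Set.infinite_coe_iff.mp hz
    refine ⟨z.1, AddSubgroup.mem_iInf.mpr ?_, z.2⟩
    intro n
    obtain ⟨m, hm, hnm⟩ := hzinf.exists_gt n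
    have : y m = z.1 := congrArg Subtype.val hm
    rw [← this]
    exact hKmono (le_of_lt hnm) (hy1 m)

end koenig

-- ### part 7/8 : retraction onto a divisible subgroup, complements
section retract

variable {A : Type} [AddCommGroup A]

lemma exists_retraction (D : AddSubgroup A) [DivisibleBy D ℤ] :
    ∃ r : A →+ D, ∀ d : D, r (d : A) = d := by
  have baer := Module.Baer.of_divisible (↥D)
  obtain ⟨r, hr⟩ := baer.extension_property_addMonoidHom D.subtype Subtype.val_injective
    (AddMonoidHom.id D)
  exact ⟨r, fun d => DFunLike.congr_fun hr d⟩

variable (D : AddSubgroup A) (r : A →+ D) (hr : ∀ d : D, r (d : A) = d)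

include hr

/-- The socle splits along a retraction. -/
def socleSplitEquiv : socle p A ≃ socle p D × socle p r.ker where
  toFun x :=
    (⟨r x.1, by
        rw [mem_socle, ← map_nsmul]
        have := x.2
        rw [mem_socle] at this
        rw [this, map_zero]⟩,
     ⟨⟨x.1 - (r x.1 : A), by
        rw [AddMonoidHom.mem_ker, map_sub, hr (r x.1), sub_self]⟩, by
        rw [mem_socle]
        apply Subtype.ext
        show p • ((x.1 : A) - (r x.1 : A)) = 0
        have hx := x.2
        rw [mem_socle] at hx
        have h2 : p • (r x.1 : A) = ((p • r x.1 : D) : A) := by push_cast; rfl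
        rw [smul_sub, hx, h2, ← map_nsmul, hx, map_zero]
        simp⟩)
  invFun dc := ⟨(dc.1.1 : A) + (dc.2.1.1 : A), by
    rw [mem_socle, smul_add]
    have h1 := dc.1.2
    have h2 := dc.2.2
    rw [mem_socle] at h1 h2
    have h1' : p • (dc.1.1 : A) = 0 := by
      rw [show p • (dc.1.1 : A) = ((p • dc.1.1 : D) : A) by push_cast; rfl, h1]; rfl
    have h2' : p • (dc.2.1.1 : A) = 0 := by
      have := congrArg Subtype.val h2
      exact this
    rw [h1', h2', add_zero]⟩
  left_inv x := by
    apply Subtype.ext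
    show (r x.1 : A) + ((x.1 : A) - (r x.1 : A)) = x.1
    abel
  right_inv dc := by
    have hd : r ((dc.1.1 : A) + (dc.2.1.1 : A)) = dc.1.1 := by
      rw [map_add, hr dc.1.1]
      have : r (dc.2.1.1 : A) = 0 := AddMonoidHom.mem_ker.mp dc.2.1.2
      rw [this, add_zero]
    refine Prod.ext (Subtype.ext hd) (Subtype.ext (Subtype.ext ?_))
    show ((dc.1.1 : A) + (dc.2.1.1 : A)) - (r ((dc.1.1 : A) + (dc.2.1.1 : A)) : A) = dc.2.1.1
    rw [hd]
    abel

lemma card_socle_split :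
    Nat.card (socle p A) = Nat.card (socle p D) * Nat.card (socle p r.ker) := by
  rw [Nat.card_congr (socleSplitEquiv (p := p) D r hr), Nat.card_prod]

lemma pdiv_ker_retraction (hdiv : PDiv p A) : PDiv p r.ker := by
  intro c
  obtain ⟨y, hy⟩ := hdiv (c.1 : A)
  have hc : r (c.1 : A) = 0 := AddMonoidHom.mem_ker.mp c.2
  refine ⟨⟨y - (r y : A), by rw [AddMonoidHom.mem_ker, map_sub, hr (r y), sub_self]⟩, ?_⟩
  apply Subtype.ext
  show p • (y - (r y : A)) = (c.1 : A)
  have h2 : p • (r y : A) = ((r (p • y) : D) : A) := by rw [map_nsmul]; push_cast; rfl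
  rw [smul_sub, h2, hy, hc]
  show (c.1 : A) - ((0 : D) : A) = (c.1 : A)
  simp

lemma prim_subgroup (hprim : Prim p A) (B : AddSubgroup A) : Prim p B :=
  hprim.addSubgroup B

/-- the quotient `A ⧸ H` is isomorphic to `C ⧸ (H ∩ C)` when `D ≤ H` splits off. -/
lemma quotient_equiv_ker (H : AddSubgroup A) (hDH : D ≤ H) :
    Nonempty ((A ⧸ H) ≃+ (r.ker ⧸ (H.addSubgroupOf r.ker))) := by
  set C := r.ker with hC
  set proj : A →+ C := AddMonoidHom.mk' (fun x => ⟨x - (r x : A), by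
      rw [AddMonoidHom.mem_ker, map_sub, hr (r x), sub_self]⟩)
    (fun a b => by
      apply Subtype.ext
      show (a + b) - (r (a + b) : A) = (a - (r a : A)) + (b - (r b : A))
      rw [map_add]
      push_cast
      abel) with hproj
  set ψ : A →+ C ⧸ (H.addSubgroupOf C) := (QuotientAddGroup.mk' _).comp proj with hψ
  have hproj_apply : ∀ x : A, (proj x : A) = x - (r x : A) := fun x => rfl
  have hψsurj : Function.Surjective ψ := by
    apply Function.Surjective.comp (QuotientAddGroup.mk'_surjective _)
    intro c
    refine ⟨(c : A), ?_⟩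
    apply Subtype.ext
    rw [hproj_apply]
    have : r (c : A) = 0 := AddMonoidHom.mem_ker.mp c.2
    rw [this]
    show (c : A) - ((0 : D) : A) = (c : A)
    simp
  have hker : ψ.ker = H := by
    ext x
    rw [AddMonoidHom.mem_ker, hψ, AddMonoidHom.comp_apply,
      QuotientAddGroup.mk'_apply, QuotientAddGroup.eq_zero_iff,
      AddSubgroup.mem_addSubgroupOf, hproj_apply]
    constructor
    · intro hx
      have : x = (x - (r x : A)) + (r x : A) := by abel
      rw [this]
      exact H.add_mem hx (hDH (r x).2)
    · intro hx
      exact H.sub_mem hx (hDH (r x).2)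
  exact ⟨(QuotientAddGroup.quotientAddEquivOfEq hker.symm).trans
    (QuotientAddGroup.quotientKerEquivOfSurjective ψ hψsurj)⟩

end retract

-- ### part 10 : quotient by a finite subgroup preserves socle cardinality
section quotfin

variable {A : Type} [AddCommGroup A]

lemma card_socle_quotient_finite (hdiv : PDiv p A) [Finite (socle p A)]
    (K : AddSubgroup A) [Finite K] :
    Nat.card (socle p (A ⧸ K)) = Nat.card (socle p A) := by
  classical
  set T : AddSubgroup A := AddSubgroup.comap (QuotientAddGroup.mk' K) (socle p (A ⧸ K)) with hT
  have hTmem : ∀ {x : A}, x ∈ T ↔ p • x ∈ K := by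
    intro x
    rw [hT, AddSubgroup.mem_comap, mem_socle, QuotientAddGroup.mk'_apply,
      ← QuotientAddGroup.mk_nsmul, QuotientAddGroup.eq_zero_iff]
  set u : T →+ K := AddMonoidHom.mk' (fun x => ⟨p • (x.1 : A), hTmem.mp x.2⟩)
    (fun a b => by
      apply Subtype.ext
      show p • ((a.1 : A) + (b.1 : A)) = p • (a.1 : A) + p • (b.1 : A)
      rw [smul_add]) with hu
  have husurj : Function.Surjective u := by
    intro k
    obtain ⟨y, hy⟩ := hdiv (k : A)
    refine ⟨⟨y, hTmem.mpr (by rw [hy]; exact k.2)⟩, ?_⟩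
    apply Subtype.ext
    exact hy
  have hker_equiv : u.ker ≃ socle p A :=
    { toFun := fun x => ⟨x.1.1, by
        have hx := x.2
        rw [AddMonoidHom.mem_ker] at hx
        have := congrArg Subtype.val hx
        exact this⟩
      invFun := fun y => ⟨⟨y.1, hTmem.mpr (by
          have hy := y.2
          rw [mem_socle] at hy
          rw [hy]
          exact K.zero_mem)⟩, by
        rw [AddMonoidHom.mem_ker]
        apply Subtype.ext
        exact y.2⟩
      left_inv := fun x => by apply Subtype.ext; apply Subtype.ext; rfl
      right_inv := fun y => by apply Subtype.ext; rfl }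
  haveI : Finite T := by
    apply finite_of_hom u
    · exact Finite.of_equiv _ hker_equiv.symm
    · infer_instance
  have h1 : Nat.card T = Nat.card K * Nat.card (socle p A) := by
    rw [AddSubgroup.card_eq_card_quotient_mul_card_addSubgroup u.ker]
    congr 1
    · exact Nat.card_congr (QuotientAddGroup.quotientKerEquivOfSurjective u husurj).toEquiv
    · exact Nat.card_congr hker_equiv
  set v : T →+ (A ⧸ K) := (QuotientAddGroup.mk' K).comp T.subtype with hv
  have hvker : v.ker ≃ K :=
    { toFun := fun x => ⟨x.1.1, by
        have hx : (QuotientAddGroup.mk (x.1.1 : A) : A ⧸ K) = 0 := x.2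
        exact (QuotientAddGroup.eq_zero_iff _).mp hx⟩
      invFun := fun k => ⟨⟨k.1, hTmem.mpr (K.nsmul_mem k.2 p)⟩, by
        rw [AddMonoidHom.mem_ker]
        exact (QuotientAddGroup.eq_zero_iff _).mpr k.2⟩
      left_inv := fun x => by apply Subtype.ext; apply Subtype.ext; rfl
      right_inv := fun k => by apply Subtype.ext; rfl }
  have hvrange : v.range = socle p (A ⧸ K) := by
    ext y
    constructor
    · rintro ⟨x, rfl⟩
      rw [mem_socle]
      show p • (QuotientAddGroup.mk' K) (x.1 : A) = 0
      rw [QuotientAddGroup.mk'_apply, ← QuotientAddGroup.mk_nsmul, QuotientAddGroup.eq_zero_iff]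
      exact hTmem.mp x.2
    · intro hy
      obtain ⟨x, rfl⟩ := QuotientAddGroup.mk'_surjective K y
      rw [mem_socle, QuotientAddGroup.mk'_apply, ← QuotientAddGroup.mk_nsmul,
        QuotientAddGroup.eq_zero_iff] at hy
      exact ⟨⟨x, hTmem.mpr hy⟩, rfl⟩
  have h2 : Nat.card T = Nat.card (socle p (A ⧸ K)) * Nat.card K := by
    rw [AddSubgroup.card_eq_card_quotient_mul_card_addSubgroup v.ker]
    congr 1
    · rw [← hvrange]
      exact Nat.card_congr (QuotientAddGroup.quotientKerEquivRange v).toEquiv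
    · exact Nat.card_congr hvker
  have hKpos : 0 < Nat.card K := Nat.card_pos
  apply Nat.eq_of_mul_eq_mul_right hKpos
  rw [← h2, h1, mul_comm]

end quotfin

-- ### part 11 : the main induction
theorem key (d : ℕ) : ∀ (A : Type) (_ : AddCommGroup A), ∀ (_hprim : Prim p A) (_hdiv : PDiv p A)
    (_hcard : Nat.card (socle p A) = p ^ d) (H : AddSubgroup A) (_hH : ¬ Finite H),
    ∃ d' : ℕ, d' < d ∧ Nonempty ((A ⧸ H) ≃+ (Fin d' → ZpInfty p)) := by
  induction d using Nat.strong_induction_on with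
  | _ d ih =>
  intro A _inst hprim hdiv hcard H hH
  have hp : p.Prime := Fact.out
  haveI : Finite (socle p A) :=
    Nat.finite_of_card_ne_zero (by rw [hcard]; exact (pow_pos hp.pos d).ne')
  obtain ⟨D, hDH, ⟨x0, hx0D, hx00⟩, hDdiv⟩ := exists_pdiv_subgroup hprim H hH
  have hDpdiv : PDiv p D := by
    intro x
    obtain ⟨y, hyD, hy⟩ := hDdiv x.1 x.2
    exact ⟨⟨y, hyD⟩, Subtype.ext hy⟩
  have hDprim : Prim p D := hprim.addSubgroup D
  letI : DivisibleBy D ℤ := divisibleOfPrimPDiv hDprim hDpdiv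
  obtain ⟨r, hr⟩ := exists_retraction D
  have hCprim : Prim p r.ker := hprim.addSubgroup _
  have hCpdiv : PDiv p r.ker := pdiv_ker_retraction D r hr hdiv
  have hsplit := card_socle_split (p := p) D r hr
  haveI : Finite (socle p D) := by
    apply Finite.of_injective (fun x : socle p D => (⟨x.1.1, by
      have hx := x.2
      rw [mem_socle] at hx ⊢
      exact_mod_cast congrArg Subtype.val hx⟩ : socle p A))
    intro a b h
    apply Subtype.ext; apply Subtype.ext
    simpa using congrArg Subtype.val h
  have hsocD_two : 1 < Nat.card (socle p D) := by
    rw [Finite.one_lt_card_iff_nontrivial]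
    obtain ⟨y, hy0, hyp, -⟩ := hDprim.exists_socle
      (show (⟨x0, hx0D⟩ : D) ≠ 0 from fun hc => hx00 (congrArg Subtype.val hc))
    exact ⟨⟨⟨y, hyp⟩, 0, fun hc => hy0 (congrArg Subtype.val hc)⟩⟩
  have hdvd : Nat.card (socle p r.ker) ∣ p ^ d := by
    refine ⟨Nat.card (socle p D), ?_⟩
    rw [← hcard, hsplit, mul_comm]
  obtain ⟨m, hmle, hb⟩ := (Nat.dvd_prime_pow hp).mp hdvd
  have hmd : m < d := by
    rcases Nat.lt_or_ge m d with h | h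
    · exact h
    · exfalso
      have hmd' : m = d := le_antisymm hmle h
      rw [hmd', ← hcard, hsplit] at hb
      have : Nat.card (socle p D) = 1 := by
        have hpos : 0 < Nat.card (socle p r.ker) := by
          rcases Nat.eq_zero_or_pos (Nat.card (socle p r.ker)) with h0 | h0
          · rw [h0, mul_zero] at hsplit
            rw [hsplit] at hcard
            exact absurd hcard.symm (pow_pos hp.pos d).ne'
          · exact h0
        have := hb.symm
        nlinarith [hsocD_two]
      omega
  obtain ⟨e⟩ := quotient_equiv_ker D r hr H hDH
  set HC := H.addSubgroupOf r.ker with hHC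
  by_cases hfin : Finite HC
  · haveI := hfin
    haveI : Finite (socle p r.ker) :=
      Nat.finite_of_card_ne_zero (by rw [hb]; exact (pow_pos hp.pos m).ne')
    have hq := card_socle_quotient_finite hCpdiv HC
    have hqprim : Prim p (r.ker ⧸ HC) :=
      hCprim.of_surjective (QuotientAddGroup.mk' _) (QuotientAddGroup.mk'_surjective _)
    have hqdiv : PDiv p (r.ker ⧸ HC) :=
      hCpdiv.of_surjective (QuotientAddGroup.mk' _) (QuotientAddGroup.mk'_surjective _)
    obtain ⟨e2⟩ := nonempty_addEquiv_pow_of_prim_pdiv hqprim hqdiv m (by rw [hq, hb])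
    exact ⟨m, hmd, ⟨e.trans e2⟩⟩
  · obtain ⟨d', hd', ⟨e2⟩⟩ := ih m hmd r.ker inferInstance hCprim hCpdiv hb HC hfin
    exact ⟨d', lt_trans hd' hmd, ⟨e.trans e2⟩⟩

end PruferAux

/-- A subgroup `H` of a direct sum `G` of `d` copies of `ℤ(p^∞)` is either finite,
or `G ⧸ H` is isomorphic to a direct sum of `d' < d` copies of `ℤ(p^∞)`. -/
theorem subgroup_of_prufer_power
    (p : ℕ) [Fact p.Prime] (d : ℕ)
    (H : AddSubgroup (Fin d → ZpInfty p)) :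
    Finite H ∨ ∃ d' : ℕ, d' < d ∧
      Nonempty (((Fin d → ZpInfty p) ⧸ H) ≃+ (Fin d' → ZpInfty p)) := by
  by_cases hfin : Finite H
  · exact Or.inl hfin
  · exact Or.inr (PruferAux.key d (Fin d → ZpInfty p) inferInstance
      (PruferAux.Prim.pi PruferAux.zpinfty_prim) (PruferAux.PDiv.pi PruferAux.zpinfty_pdiv)
      (PruferAux.card_socle_pi_zpinfty d) H hfin)
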